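/- arXiv:1210.0180 — 8 statements merged into one kernel-verified Lean document; each statement's English description precedes it below -/
import Mathlib

section
/- Let P, U, D ∈ ℝ^{n×n} with P symmetric negative definite, U symmetric positive definite block-diagonal of the form U = diag(U₁₁, U₂₂) with U₁₁ ∈ ℝ^{m×m}, and D of the block form D = [[D₁₁, 0],[0, 0]] where D₁₁ ∈ ℝ^{m×m} is nonsingular. Then P + D U Dᵗ ⪯ 0 if and only if −Dᵗ P⁻¹ D − U⁻¹ ⪯ 0. -/
open Matrix

theorem stmt_1 {m k : ℕ}
    (P : Matrix (Fin m ⊕ Fin k) (Fin m ⊕ Fin k) ℝ)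
    (U11 : Matrix (Fin m) (Fin m) ℝ) (U22 : Matrix (Fin k) (Fin k) ℝ)
    (D11 : Matrix (Fin m) (Fin m) ℝ)
    (hP : (-P).PosDef)
    (hU : (Matrix.fromBlocks U11 0 0 U22).PosDef)
    (hD11 : IsUnit D11.det) :
    let U : Matrix (Fin m ⊕ Fin k) (Fin m ⊕ Fin k) ℝ := Matrix.fromBlocks U11 0 0 U22
    let D : Matrix (Fin m ⊕ Fin k) (Fin m ⊕ Fin k) ℝ := Matrix.fromBlocks D11 0 0 0
    ((-(P + D * U * Dᵀ)).PosSemidef ↔ (Dᵀ * P⁻¹ * D + U⁻¹).PosSemidef) := by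
  intro U D
  have hUi : U⁻¹.PosDef := hU.inv
  haveI : Invertible U⁻¹ := hUi.isUnit.invertible
  haveI : Invertible (-P) := hP.isUnit.invertible
  have hPu : IsUnit P := by simpa using hP.isUnit.neg
  have h1 : (-P)⁻¹ = -(P⁻¹) := by
    apply Matrix.inv_eq_right_inv
    rw [neg_mul_neg, Matrix.mul_nonsing_inv _ ((Matrix.isUnit_iff_isUnit_det _).mp hPu)]
  have h2 : (U⁻¹)⁻¹ = U :=
    Matrix.nonsing_inv_nonsing_inv _ ((Matrix.isUnit_iff_isUnit_det _).mp hU.isUnit)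
  have hDt : Dᵀ = Dᴴ := (Matrix.conjTranspose_eq_transpose_of_trivial D).symm
  calc (-(P + D * U * Dᵀ)).PosSemidef
      ↔ ((-P) - D * (U⁻¹)⁻¹ * Dᴴ).PosSemidef := by
        rw [h2, ← hDt]
        constructor <;> intro h <;> convert h using 1 <;> noncomm_ring
    _ ↔ (Matrix.fromBlocks (-P) D Dᴴ U⁻¹).PosSemidef :=
        (Matrix.PosDef.fromBlocks₂₂ _ _ hUi).symm
    _ ↔ (U⁻¹ - Dᴴ * (-P)⁻¹ * D).PosSemidef :=
        Matrix.PosDef.fromBlocks₁₁ _ _ hP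
    _ ↔ (Dᵀ * P⁻¹ * D + U⁻¹).PosSemidef := by
        rw [h1, ← hDt]
        constructor <;> intro h <;> convert h using 1 <;> noncomm_ring
end

section
/- Define G(ς) = A + Σ_{i=1}^m τ_i B_i + Σ_{j=1}^p σ_j C_j for ς = (τ, σ), and the total complementary function Ξ(x, ς) = ½ xᵗG(ς)x − αᵗτ − θᵗσ − Σ_i(τ_i ln τ_i − τ_i) − Σ_j σ_j²/(2β_j) − fᵗx. Suppose ς̄ = (τ̄, σ̄) with τ̄_i > 0 for all i, G(ς̄) is invertible, and x̄ = G(ς̄)⁻¹f satisfies the criticality conditions ½x̄ᵗB_ix̄ − α_i = ln τ̄_i for all i and σ̄_j = β_j(½x̄ᵗC_jx̄ − θ_j) for all j. Then Π(x̄) = Ξ(x̄, ς̄), where Π(x) = Σ_i exp(½xᵗB_ix − α_i) + Σ_j (β_j/2)(½xᵗC_jx − θ_j)² + ½xᵗAx − fᵗx. -/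
open Matrix Real

noncomputable def PiFun {n m p : ℕ} (A : Matrix (Fin n) (Fin n) ℝ)
    (B : Fin m → Matrix (Fin n) (Fin n) ℝ) (C : Fin p → Matrix (Fin n) (Fin n) ℝ)
    (α : Fin m → ℝ) (θ β : Fin p → ℝ) (f : Fin n → ℝ) (x : Fin n → ℝ) : ℝ :=
  (∑ i, Real.exp ((1/2) * (x ⬝ᵥ (B i *ᵥ x)) - α i)) +
  (∑ j, β j / 2 * ((1/2) * (x ⬝ᵥ (C j *ᵥ x)) - θ j) ^ 2) +
  (1/2) * (x ⬝ᵥ (A *ᵥ x)) - f ⬝ᵥ x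

noncomputable def Gmat {n m p : ℕ} (A : Matrix (Fin n) (Fin n) ℝ)
    (B : Fin m → Matrix (Fin n) (Fin n) ℝ) (C : Fin p → Matrix (Fin n) (Fin n) ℝ)
    (τ : Fin m → ℝ) (σ : Fin p → ℝ) : Matrix (Fin n) (Fin n) ℝ :=
  A + (∑ i, τ i • B i) + (∑ j, σ j • C j)

noncomputable def XiFun {n m p : ℕ} (A : Matrix (Fin n) (Fin n) ℝ)
    (B : Fin m → Matrix (Fin n) (Fin n) ℝ) (C : Fin p → Matrix (Fin n) (Fin n) ℝ)
    (α : Fin m → ℝ) (θ β : Fin p → ℝ) (f : Fin n → ℝ)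
    (x : Fin n → ℝ) (τ : Fin m → ℝ) (σ : Fin p → ℝ) : ℝ :=
  (1/2) * (x ⬝ᵥ ((Gmat A B C τ σ) *ᵥ x)) - (∑ i, α i * τ i) - (∑ j, θ j * σ j) -
  (∑ i, (τ i * Real.log (τ i) - τ i)) - (∑ j, (σ j) ^ 2 / (2 * β j)) - f ⬝ᵥ x

lemma dot_sum_smul {n m : ℕ} (B : Fin m → Matrix (Fin n) (Fin n) ℝ) (τ : Fin m → ℝ)
    (x : Fin n → ℝ) :
    x ⬝ᵥ ((∑ i, τ i • B i) *ᵥ x) = ∑ i, τ i * (x ⬝ᵥ (B i *ᵥ x)) := by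
  have h : ((∑ i, τ i • B i) *ᵥ x) = ∑ i, τ i • (B i *ᵥ x) := by
    induction (Finset.univ : Finset (Fin m)) using Finset.induction with
    | empty => simp
    | insert _ _ h ih => simp [Finset.sum_insert h, Matrix.add_mulVec, ih, Matrix.smul_mulVec]
  rw [h]
  simp [dotProduct, Finset.mul_sum]
  rw [Finset.sum_comm]
  congr 1; ext i; congr 1; ext k; ring

theorem stmt_6 {n m p : ℕ} (A : Matrix (Fin n) (Fin n) ℝ)
    (B : Fin m → Matrix (Fin n) (Fin n) ℝ) (C : Fin p → Matrix (Fin n) (Fin n) ℝ)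
    (hA : A.IsSymm) (hB : ∀ i, (B i).IsSymm) (hC : ∀ j, (C j).IsSymm)
    (α : Fin m → ℝ) (θ β : Fin p → ℝ) (hβ : ∀ j, 0 < β j) (f : Fin n → ℝ)
    (τ : Fin m → ℝ) (σ : Fin p → ℝ) (hτ : ∀ i, 0 < τ i)
    (hG : IsUnit (Gmat A B C τ σ).det)
    (x : Fin n → ℝ) (hx : x = (Gmat A B C τ σ)⁻¹ *ᵥ f)
    (h1 : ∀ i, (1/2) * (x ⬝ᵥ (B i *ᵥ x)) - α i = Real.log (τ i))
    (h2 : ∀ j, σ j = β j * ((1/2) * (x ⬝ᵥ (C j *ᵥ x)) - θ j)) :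
    PiFun A B C α θ β f x = XiFun A B C α θ β f x τ σ := by
  unfold PiFun XiFun Gmat
  rw [Matrix.add_mulVec, Matrix.add_mulVec, dotProduct_add, dotProduct_add,
    dot_sum_smul B τ x, dot_sum_smul C σ x]
  have e1 : ∀ i, Real.exp ((1/2) * (x ⬝ᵥ (B i *ᵥ x)) - α i) = τ i := fun i => by
    rw [h1 i, Real.exp_log (hτ i)]
  have e1' : ∀ i, (1/2) * (τ i * (x ⬝ᵥ (B i *ᵥ x))) - α i * τ i -
      (τ i * Real.log (τ i) - τ i) = Real.exp ((1/2) * (x ⬝ᵥ (B i *ᵥ x)) - α i) := fun i => by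
    rw [e1 i, ← h1 i]; ring
  have e2 : ∀ j, (1/2) * (σ j * (x ⬝ᵥ (C j *ᵥ x))) - θ j * σ j - (σ j) ^ 2 / (2 * β j) =
      β j / 2 * ((1/2) * (x ⬝ᵥ (C j *ᵥ x)) - θ j) ^ 2 := fun j => by
    rw [h2 j]
    have hb := (hβ j).ne'
    field_simp
    ring
  have L : (∑ i, Real.exp ((1/2) * (x ⬝ᵥ (B i *ᵥ x)) - α i)) =
      ∑ i, ((1/2) * (τ i * (x ⬝ᵥ (B i *ᵥ x))) - α i * τ i - (τ i * Real.log (τ i) - τ i)) :=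
    Finset.sum_congr rfl (fun i _ => (e1' i).symm)
  have R : (∑ j, β j / 2 * ((1/2) * (x ⬝ᵥ (C j *ᵥ x)) - θ j) ^ 2) =
      ∑ j, ((1/2) * (σ j * (x ⬝ᵥ (C j *ᵥ x))) - θ j * σ j - (σ j) ^ 2 / (2 * β j)) :=
    Finset.sum_congr rfl (fun j _ => (e2 j).symm)
  rw [L, R]
  simp only [Finset.sum_sub_distrib, ← Finset.mul_sum]
  ring
end

section
/- With notation as in the canonical duality setting, if ς̄ = (τ̄, σ̄) is such that G(ς̄) is invertible and x̄ = G(ς̄)⁻¹f satisfies ½x̄ᵗB_ix̄ − α_i = ln τ̄_i for all i and β_j(½x̄ᵗC_jx̄ − θ_j) = σ̄_j for all j, then x̄ is a stationary point of Π, i.e., ∇Π(x̄) = 0. -/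
open Matrix Real

/-- The continuous linear functional `h ↦ v ⬝ᵥ h`. -/
noncomputable def dotCLM {n : ℕ} (v : Fin n → ℝ) : (Fin n → ℝ) →L[ℝ] ℝ :=
  LinearMap.toContinuousLinearMap
    { toFun := fun h => v ⬝ᵥ h
      map_add' := fun a b => dotProduct_add v a b
      map_smul' := fun c a => by simp [dotProduct_smul] }

@[simp] lemma dotCLM_apply {n : ℕ} (v h : Fin n → ℝ) : dotCLM v h = v ⬝ᵥ h := rfl

/-- The continuous bilinear map `(u, v) ↦ u ⬝ᵥ (M *ᵥ v)`. -/
noncomputable def bilCLM {n : ℕ} (M : Matrix (Fin n) (Fin n) ℝ) :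
    (Fin n → ℝ) →L[ℝ] (Fin n → ℝ) →L[ℝ] ℝ :=
  LinearMap.toContinuousLinearMap
    { toFun := fun u => dotCLM (u ᵥ* M)
      map_add' := fun a b => by ext h; simp [add_vecMul, add_dotProduct]
      map_smul' := fun c a => by ext h; simp [Matrix.smul_vecMul, smul_dotProduct] }

lemma quadDeriv {n : ℕ} (M : Matrix (Fin n) (Fin n) ℝ) (hM : M.IsSymm) (x : Fin n → ℝ) :
    HasFDerivAt (fun y => (1/2) * (y ⬝ᵥ (M *ᵥ y))) (dotCLM (M *ᵥ x)) x := by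
  have hdiag : HasFDerivAt (fun y : Fin n → ℝ => ((y, y) : (Fin n → ℝ) × (Fin n → ℝ)))
      ((ContinuousLinearMap.id ℝ (Fin n → ℝ)).prod (ContinuousLinearMap.id ℝ (Fin n → ℝ))) x :=
    HasFDerivAt.prodMk (hasFDerivAt_id x) (hasFDerivAt_id x)
  have hb : HasFDerivAt ((fun q : (Fin n → ℝ) × (Fin n → ℝ) => (bilCLM M) q.1 q.2) ∘
      (fun y : Fin n → ℝ => (y, y)))
      (((bilCLM M).isBoundedBilinearMap.deriv (x, x)).comp
        ((ContinuousLinearMap.id ℝ (Fin n → ℝ)).prod (ContinuousLinearMap.id ℝ (Fin n → ℝ)))) x :=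
    HasFDerivAt.comp (g := fun q : (Fin n → ℝ) × (Fin n → ℝ) => (bilCLM M) q.1 q.2)
      (f := fun y : Fin n → ℝ => (y, y)) x ((bilCLM M).isBoundedBilinearMap.hasFDerivAt (x, x)) hdiag
  have hb2 := hb.const_mul (1/2 : ℝ)
  have heq : (fun y : Fin n → ℝ => (1/2 : ℝ) * ((fun q : (Fin n → ℝ) × (Fin n → ℝ) =>
      (bilCLM M) q.1 q.2) ∘ (fun y : Fin n → ℝ => (y, y))) y)
      = fun y => (1/2) * (y ⬝ᵥ (M *ᵥ y)) := by
    funext y; simp [bilCLM, dotProduct_mulVec]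
  rw [heq] at hb2
  have hD : ((1/2 : ℝ) • (((bilCLM M).isBoundedBilinearMap.deriv (x, x)).comp
      ((ContinuousLinearMap.id ℝ (Fin n → ℝ)).prod (ContinuousLinearMap.id ℝ (Fin n → ℝ)))))
      = dotCLM (M *ᵥ x) := by
    ext h
    simp [bilCLM, IsBoundedBilinearMap.deriv_apply]
    have h1 : x ᵥ* M = M *ᵥ x := by rw [← Matrix.mulVec_transpose, hM]
    rw [h1, ← dotProduct_mulVec, dotProduct_comm h (M *ᵥ x)]
    ring
  rwa [hD] at hb2

lemma sumMulVec {n : ℕ} {ι : Type*} (s : Finset ι) (M : ι → Matrix (Fin n) (Fin n) ℝ)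
    (x : Fin n → ℝ) : (∑ i ∈ s, M i) *ᵥ x = ∑ i ∈ s, M i *ᵥ x := by
  ext k
  simp [Matrix.mulVec, dotProduct, Matrix.sum_apply, Finset.sum_mul]
  rw [Finset.sum_comm]

lemma sumDot {n : ℕ} {ι : Type*} (s : Finset ι) (w : ι → Fin n → ℝ) (v : Fin n → ℝ) :
    (∑ i ∈ s, w i) ⬝ᵥ v = ∑ i ∈ s, w i ⬝ᵥ v := by
  simp [dotProduct, Finset.sum_apply, Finset.sum_mul]
  rw [Finset.sum_comm]

theorem stmt_7 {n m p : ℕ} (A : Matrix (Fin n) (Fin n) ℝ)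
    (B : Fin m → Matrix (Fin n) (Fin n) ℝ) (C : Fin p → Matrix (Fin n) (Fin n) ℝ)
    (hA : A.IsSymm) (hB : ∀ i, (B i).IsSymm) (hC : ∀ j, (C j).IsSymm)
    (α : Fin m → ℝ) (θ β : Fin p → ℝ) (hβ : ∀ j, 0 < β j) (f : Fin n → ℝ)
    (τ : Fin m → ℝ) (σ : Fin p → ℝ) (hτ : ∀ i, 0 < τ i)
    (hG : IsUnit (Gmat A B C τ σ).det)
    (x : Fin n → ℝ) (hx : x = (Gmat A B C τ σ)⁻¹ *ᵥ f)
    (h1 : ∀ i, (1/2) * (x ⬝ᵥ (B i *ᵥ x)) - α i = Real.log (τ i))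
    (h2 : ∀ j, β j * ((1/2) * (x ⬝ᵥ (C j *ᵥ x)) - θ j) = σ j) :
    HasFDerivAt (PiFun A B C α θ β f) (0 : (Fin n → ℝ) →L[ℝ] ℝ) x := by
  have hGx : Gmat A B C τ σ *ᵥ x = f := by
    rw [hx, mulVec_mulVec, Matrix.mul_nonsing_inv _ hG, one_mulVec]
  have H1 : HasFDerivAt (fun y : Fin n → ℝ => ∑ i, Real.exp ((1/2) * (y ⬝ᵥ (B i *ᵥ y)) - α i))
      (∑ i, τ i • dotCLM (B i *ᵥ x)) x := by
    apply HasFDerivAt.fun_sum; intro i _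
    have h := ((quadDeriv (B i) (hB i) x).sub_const (α i)).exp
    rwa [h1 i, Real.exp_log (hτ i)] at h
  have H2 : HasFDerivAt (fun y : Fin n → ℝ =>
      ∑ j, β j / 2 * ((1/2) * (y ⬝ᵥ (C j *ᵥ y)) - θ j) ^ 2)
      (∑ j, σ j • dotCLM (C j *ᵥ x)) x := by
    apply HasFDerivAt.fun_sum; intro j _
    have hs := (quadDeriv (C j) (hC j) x).sub_const (θ j)
    have h := (hs.mul hs).const_mul (β j / 2)
    refine (h.congr_fderiv ?_).congr_of_eventuallyEq (Filter.Eventually.of_forall ?_)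
    · ext v
      simp only [ContinuousLinearMap.smul_apply, ContinuousLinearMap.add_apply,
        dotCLM_apply, smul_eq_mul]
      rw [← h2 j]; ring
    · intro y; simp only [Pi.mul_apply]; ring
  have H3 := quadDeriv A hA x
  have H4 : HasFDerivAt (fun y : Fin n → ℝ => f ⬝ᵥ y) (dotCLM f) x := (dotCLM f).hasFDerivAt
  have H := ((H1.add H2).add H3).sub H4
  have hD : (∑ i, τ i • dotCLM (B i *ᵥ x)) + (∑ j, σ j • dotCLM (C j *ᵥ x))
      + dotCLM (A *ᵥ x) - dotCLM f = 0 := by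
    ext v
    simp only [ContinuousLinearMap.sub_apply, ContinuousLinearMap.add_apply,
      ContinuousLinearMap.sum_apply, ContinuousLinearMap.smul_apply, dotCLM_apply,
      ContinuousLinearMap.zero_apply, smul_eq_mul]
    rw [← hGx]
    simp [Gmat, add_mulVec, sumMulVec, sumDot, smul_mulVec, add_dotProduct,
      smul_dotProduct, smul_eq_mul]
    ring
  rw [hD] at H
  exact H
end

section
/- (Global optimality via canonical duality) Suppose ς̄ = (τ̄, σ̄) with τ̄_i > 0, G(ς̄) ≻ 0 (positive definite), and x̄ = G(ς̄)⁻¹f satisfies ½x̄ᵗB_ix̄ − α_i = ln τ̄_i and σ̄_j = β_j(½x̄ᵗC_jx̄ − θ_j). Then x̄ is the unique global minimizer of Π over ℝ^n: for every x ≠ x̄, Π(x) > Π(x̄). -/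
open Matrix Real

/-- mulVec distributes over finite sums of matrices. -/
lemma my_sum_mulVec {ι n : Type*} [Fintype n] (s : Finset ι)
    (M : ι → Matrix n n ℝ) (v : n → ℝ) :
    (∑ i ∈ s, M i) *ᵥ v = ∑ i ∈ s, (M i *ᵥ v) := by
  ext k
  simp only [Matrix.mulVec, dotProduct, Finset.sum_apply, Matrix.sum_apply,
    Finset.sum_mul]
  exact Finset.sum_comm

/-- dotProduct distributes over finite sums of vectors. -/
lemma my_dotProduct_sum {ι n : Type*} [Fintype n] (s : Finset ι)
    (v : n → ℝ) (w : ι → n → ℝ) :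
    v ⬝ᵥ (∑ i ∈ s, w i) = ∑ i ∈ s, v ⬝ᵥ w i := by
  simp only [dotProduct, Finset.sum_apply, Finset.mul_sum]
  exact Finset.sum_comm

lemma expIneq (u t : ℝ) (ht : 0 < t) :
    t * u - (t * Real.log t - t) ≤ Real.exp u := by
  have h := Real.add_one_le_exp (u - Real.log t)
  have h2 : Real.exp (u - Real.log t) = Real.exp u / t := by
    rw [Real.exp_sub, Real.exp_log ht]
  rw [h2] at h
  have h3 := (le_div_iff₀ ht).mp h
  nlinarith [h3]

lemma sqIneq (v s b : ℝ) (hb : 0 < b) :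
    s * v - s ^ 2 / (2 * b) ≤ b / 2 * v ^ 2 := by
  have h : 0 ≤ b / 2 * (v - s / b) ^ 2 := by positivity
  have he : b / 2 * (v - s / b) ^ 2 = b / 2 * v ^ 2 - (s * v - s ^ 2 / (2 * b)) := by
    field_simp
    ring
  linarith [he ▸ h]

theorem stmt_10 {n m p : ℕ} (A : Matrix (Fin n) (Fin n) ℝ)
    (B : Fin m → Matrix (Fin n) (Fin n) ℝ) (C : Fin p → Matrix (Fin n) (Fin n) ℝ)
    (hA : A.IsSymm) (hB : ∀ i, (B i).IsSymm) (hC : ∀ j, (C j).IsSymm)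
    (α : Fin m → ℝ) (θ β : Fin p → ℝ) (hβ : ∀ j, 0 < β j) (f : Fin n → ℝ)
    (τ : Fin m → ℝ) (σ : Fin p → ℝ) (hτ : ∀ i, 0 < τ i)
    (hG : (Gmat A B C τ σ).PosDef)
    (x : Fin n → ℝ) (hx : x = (Gmat A B C τ σ)⁻¹ *ᵥ f)
    (h1 : ∀ i, (1/2) * (x ⬝ᵥ (B i *ᵥ x)) - α i = Real.log (τ i))
    (h2 : ∀ j, σ j = β j * ((1/2) * (x ⬝ᵥ (C j *ᵥ x)) - θ j)) :
    ∀ y : Fin n → ℝ, y ≠ x →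
      PiFun A B C α θ β f x < PiFun A B C α θ β f y := by
  intro y hy
  set G := Gmat A B C τ σ with hGdef
  -- G is symmetric
  have hGsymm : G.IsSymm := by
    unfold Matrix.IsSymm at *
    simp only [hGdef, Gmat, Matrix.transpose_add, Matrix.transpose_sum,
      Matrix.transpose_smul, hA, hB, hC]
  -- G x = f
  have hGx : G *ᵥ x = f := by
    rw [hx, Matrix.mulVec_mulVec,
      Matrix.mul_nonsing_inv _ (isUnit_iff_ne_zero.mpr hG.det_pos.ne'),
      Matrix.one_mulVec]
  -- quadratic form decomposition
  have hGquad : ∀ z : Fin n → ℝ, z ⬝ᵥ (G *ᵥ z)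
      = z ⬝ᵥ (A *ᵥ z) + (∑ i, τ i * (z ⬝ᵥ (B i *ᵥ z)))
        + (∑ j, σ j * (z ⬝ᵥ (C j *ᵥ z))) := by
    intro z
    simp only [hGdef, Gmat, Matrix.add_mulVec, my_sum_mulVec, Matrix.smul_mulVec,
      dotProduct_add, my_dotProduct_sum, dotProduct_smul, smul_eq_mul]
  -- rewrite Xi into termwise form
  have hXi : ∀ z : Fin n → ℝ, XiFun A B C α θ β f z τ σ
      = (∑ i, (τ i * ((1/2) * (z ⬝ᵥ (B i *ᵥ z)) - α i) - (τ i * Real.log (τ i) - τ i)))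
        + (∑ j, (σ j * ((1/2) * (z ⬝ᵥ (C j *ᵥ z)) - θ j) - (σ j) ^ 2 / (2 * β j)))
        + ((1/2) * (z ⬝ᵥ (A *ᵥ z)) - f ⬝ᵥ z) := by
    intro z
    have eB : (∑ i, (τ i * ((1/2) * (z ⬝ᵥ (B i *ᵥ z)) - α i) - (τ i * Real.log (τ i) - τ i)))
        = (1/2) * (∑ i, τ i * (z ⬝ᵥ (B i *ᵥ z))) - (∑ i, α i * τ i)
          - (∑ i, (τ i * Real.log (τ i) - τ i)) := by
      rw [Finset.mul_sum, ← Finset.sum_sub_distrib, ← Finset.sum_sub_distrib]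
      exact Finset.sum_congr rfl fun i _ => by ring
    have eC : (∑ j, (σ j * ((1/2) * (z ⬝ᵥ (C j *ᵥ z)) - θ j) - (σ j) ^ 2 / (2 * β j)))
        = (1/2) * (∑ j, σ j * (z ⬝ᵥ (C j *ᵥ z))) - (∑ j, θ j * σ j)
          - (∑ j, (σ j) ^ 2 / (2 * β j)) := by
      rw [Finset.mul_sum, ← Finset.sum_sub_distrib, ← Finset.sum_sub_distrib]
      exact Finset.sum_congr rfl fun j _ => by ring
    rw [eB, eC]
    unfold XiFun
    rw [← hGdef, hGquad z]
    ring
  -- Fenchel: Xi ≤ Pi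
  have key : ∀ z : Fin n → ℝ, XiFun A B C α θ β f z τ σ ≤ PiFun A B C α θ β f z := by
    intro z
    rw [hXi z]
    unfold PiFun
    have hBsum : (∑ i, (τ i * ((1/2) * (z ⬝ᵥ (B i *ᵥ z)) - α i) - (τ i * Real.log (τ i) - τ i)))
        ≤ ∑ i, Real.exp ((1/2) * (z ⬝ᵥ (B i *ᵥ z)) - α i) :=
      Finset.sum_le_sum fun i _ => expIneq _ _ (hτ i)
    have hCsum : (∑ j, (σ j * ((1/2) * (z ⬝ᵥ (C j *ᵥ z)) - θ j) - (σ j) ^ 2 / (2 * β j)))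
        ≤ ∑ j, β j / 2 * ((1/2) * (z ⬝ᵥ (C j *ᵥ z)) - θ j) ^ 2 :=
      Finset.sum_le_sum fun j _ => sqIneq _ _ _ (hβ j)
    linarith
  -- equality at x
  have heq : PiFun A B C α θ β f x = XiFun A B C α θ β f x τ σ := by
    rw [hXi x]
    unfold PiFun
    have eB : (∑ i, Real.exp ((1/2) * (x ⬝ᵥ (B i *ᵥ x)) - α i))
        = (∑ i, (τ i * ((1/2) * (x ⬝ᵥ (B i *ᵥ x)) - α i) - (τ i * Real.log (τ i) - τ i))) := by
      refine Finset.sum_congr rfl fun i _ => ?_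
      rw [h1 i, Real.exp_log (hτ i)]
      ring
    have eC : (∑ j, β j / 2 * ((1/2) * (x ⬝ᵥ (C j *ᵥ x)) - θ j) ^ 2)
        = (∑ j, (σ j * ((1/2) * (x ⬝ᵥ (C j *ᵥ x)) - θ j) - (σ j) ^ 2 / (2 * β j))) := by
      refine Finset.sum_congr rfl fun j _ => ?_
      rw [h2 j]
      have := (hβ j).ne'
      field_simp
      ring
    rw [eB, eC]
    ring
  -- strict inequality on the quadratic part
  have hquad : XiFun A B C α θ β f x τ σ < XiFun A B C α θ β f y τ σ := by
    have hd : y - x ≠ 0 := sub_ne_zero.mpr hy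
    have hpd := hG.dotProduct_mulVec_pos hd
    simp only [star_trivial] at hpd
    have hxvm : x ᵥ* G = f := by
      rw [← hGsymm, Matrix.vecMul_transpose, hGx]
    have e1 : x ⬝ᵥ (G *ᵥ y) = f ⬝ᵥ y := by
      rw [Matrix.dotProduct_mulVec, hxvm]
    have e2 : y ⬝ᵥ (G *ᵥ x) = f ⬝ᵥ y := by
      rw [hGx, dotProduct_comm]
    have e3 : (y - x) ⬝ᵥ (G *ᵥ (y - x))
        = y ⬝ᵥ (G *ᵥ y) - f ⬝ᵥ y - f ⬝ᵥ y + x ⬝ᵥ (G *ᵥ x) := by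
      rw [Matrix.mulVec_sub, sub_dotProduct, dotProduct_sub,
        dotProduct_sub, e1, e2]
      ring
    rw [e3] at hpd
    have e4 : f ⬝ᵥ x = x ⬝ᵥ (G *ᵥ x) := by
      rw [← hGx, dotProduct_comm]
    unfold XiFun
    rw [← hGdef]
    linarith
  calc PiFun A B C α θ β f x = XiFun A B C α θ β f x τ σ := heq
    _ < XiFun A B C α θ β f y τ σ := hquad
    _ ≤ PiFun A B C α θ β f y := key y
end

section
/- Let G ∈ ℝ^{n×n} be symmetric negative definite, D ∈ ℝ^{k×k} symmetric positive definite, and F ∈ ℝ^{n×k} arbitrary. Then −Fᵗ G⁻¹ F − D⁻¹ ⪯ 0 if and only if G + F D Fᵗ ⪯ 0. -/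
open Matrix

theorem stmt_12 {n k : ℕ} (G : Matrix (Fin n) (Fin n) ℝ)
    (D : Matrix (Fin k) (Fin k) ℝ) (F : Matrix (Fin n) (Fin k) ℝ)
    (hG : (-G).PosDef) (hD : D.PosDef) :
    (Fᵀ * G⁻¹ * F + D⁻¹).PosSemidef ↔ (-(G + F * D * Fᵀ)).PosSemidef := by
  have hDinv : D⁻¹.PosDef := hD.inv
  haveI : Invertible (-G) := hG.isUnit.invertible
  haveI : Invertible D⁻¹ := hDinv.isUnit.invertible
  have h1 := Matrix.PosDef.fromBlocks₁₁ F D⁻¹ hG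
  have h2 := Matrix.PosDef.fromBlocks₂₂ (-G) F hDinv
  have hneg : (-G)⁻¹ = -G⁻¹ := by
    have hGu : IsUnit G.det := by
      have := hG.isUnit
      rw [Matrix.isUnit_iff_isUnit_det, Matrix.det_neg] at this
      exact (IsUnit.mul_iff.mp this).2
    apply Matrix.inv_eq_right_inv
    rw [Matrix.neg_mul, Matrix.mul_neg, neg_neg, Matrix.mul_nonsing_inv _ hGu]
  have e1 : D⁻¹ - Fᴴ * (-G)⁻¹ * F = Fᵀ * G⁻¹ * F + D⁻¹ := by
    rw [hneg]
    simp [Matrix.conjTranspose_eq_transpose_of_trivial, sub_eq_add_neg, Matrix.mul_neg,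
      Matrix.neg_mul]
    abel
  have e2 : -G - F * D⁻¹⁻¹ * Fᴴ = -(G + F * D * Fᵀ) := by
    rw [Matrix.nonsing_inv_nonsing_inv _ ((Matrix.isUnit_iff_isUnit_det D).mp hD.isUnit)]
    · simp [Matrix.conjTranspose_eq_transpose_of_trivial, neg_add, sub_eq_add_neg]
      abel
  rw [e1] at h1
  rw [e2] at h2
  rw [← h1, ← h2]
end

section
/- Let G ∈ ℝ^{n×n} be symmetric negative definite, D ∈ ℝ^{k×k} symmetric positive definite with k < n, and F ∈ ℝ^{n×k} with −FᵗG⁻¹F − D⁻¹ ⪰ 0. Then G + F D Fᵗ is not positive semidefinite. -/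
open Matrix

theorem stmt_14 {n k : ℕ} (G : Matrix (Fin n) (Fin n) ℝ)
    (D : Matrix (Fin k) (Fin k) ℝ) (F : Matrix (Fin n) (Fin k) ℝ)
    (hG : (-G).PosDef) (hD : D.PosDef) (hk : k < n)
    (h : (-(Fᵀ * G⁻¹ * F) - D⁻¹).PosSemidef) :
    ¬ (G + F * D * Fᵀ).PosSemidef := by
  intro hP
  have hpd : (F * D * Fᵀ).PosDef := by
    have h1 : ((G + F * D * Fᵀ) + -G).PosDef := by
      refine ⟨hP.1.add hG.1, fun x hx => ?_⟩
      have a := hP.2 x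
      have b := hG.2 hx
      simp only [Matrix.add_apply, Matrix.neg_apply, mul_add, add_mul, mul_neg, neg_mul, Finsupp.sum_add, Finsupp.sum_neg] at *
      linarith
    have h2 : (G + F * D * Fᵀ) + -G = F * D * Fᵀ := by abel
    rwa [h2] at h1
  have hunit : IsUnit (F * D * Fᵀ) := by
    rw [Matrix.isUnit_iff_isUnit_det]
    exact isUnit_iff_ne_zero.mpr (ne_of_gt hpd.det_pos)
  have hrank : (F * D * Fᵀ).rank = n := by
    simpa using Matrix.rank_of_isUnit _ hunit
  have hle : (F * D * Fᵀ).rank ≤ k := by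
    calc (F * D * Fᵀ).rank ≤ (F * D).rank := Matrix.rank_mul_le_left _ _
      _ ≤ Fintype.card (Fin k) := Matrix.rank_le_card_width _
      _ = k := Fintype.card_fin k
  omega
end

section
/- Let G ∈ ℝ^{n×n} be symmetric negative definite, D ∈ ℝ^{n×n} symmetric positive definite, and F ∈ ℝ^{n×n} with −FᵗG⁻¹F − D⁻¹ ⪰ 0 (positive semidefinite). Then F is invertible and G + F D Fᵗ ⪰ 0. -/
open Matrix

theorem stmt_15 {n : ℕ} (G D F : Matrix (Fin n) (Fin n) ℝ)
    (hG : (-G).PosDef) (hD : D.PosDef)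
    (h : (-(Fᵀ * G⁻¹ * F) - D⁻¹).PosSemidef) :
    IsUnit F.det ∧ (G + F * D * Fᵀ).PosSemidef := by
  have hDi : D⁻¹.PosDef := Matrix.posDef_inv_iff.mpr hD
  have hdetG : (-G).det ≠ 0 := hG.det_pos.ne'
  have hdetG' : G.det ≠ 0 := by
    intro h0; apply hdetG; rw [Matrix.det_neg, h0, mul_zero]
  have hinvneg : (-G)⁻¹ = -(G⁻¹) :=
    Matrix.inv_eq_right_inv (by
      rw [neg_mul_neg, Matrix.mul_nonsing_inv G (isUnit_iff_ne_zero.mpr hdetG')])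
  have hAeq : -(Fᵀ * G⁻¹ * F) = Fᵀ * (-G)⁻¹ * F := by
    rw [hinvneg]; noncomm_ring
  set A := -(Fᵀ * G⁻¹ * F) with hA_def
  have hA : A.PosDef := by
    have := Matrix.PosDef.posSemidef_add h hDi
    simpa using this
  have hdetA : A.det ≠ 0 := hA.det_pos.ne'
  have hdetF : F.det ≠ 0 := by
    intro hF
    apply hdetA
    rw [hAeq, Matrix.det_mul, hF, mul_zero]
  have hdetFT : Fᵀ.det ≠ 0 := by rwa [Matrix.det_transpose]
  refine ⟨isUnit_iff_ne_zero.mpr hdetF, ?_⟩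
  haveI : Invertible A := A.invertibleOfIsUnitDet (isUnit_iff_ne_zero.mpr hdetA)
  haveI : Invertible D := D.invertibleOfIsUnitDet (isUnit_iff_ne_zero.mpr hD.det_pos.ne')
  have hM : (Matrix.fromBlocks A 1 (1 : Matrix (Fin n) (Fin n) ℝ)ᴴ D).PosSemidef := by
    rw [Matrix.PosDef.fromBlocks₂₂ _ _ hD]
    simpa using h
  have h2 : (D - A⁻¹).PosSemidef := by
    have := (Matrix.PosDef.fromBlocks₁₁ (1 : Matrix (Fin n) (Fin n) ℝ) D hA).mp hM
    simpa using this
  have hAinv : A⁻¹ = F⁻¹ * (-G) * Fᵀ⁻¹ := by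
    rw [hAeq, Matrix.mul_inv_rev, Matrix.mul_inv_rev,
      Matrix.nonsing_inv_nonsing_inv (-G) (isUnit_iff_ne_zero.mpr hdetG), Matrix.mul_assoc]
  have hFA : F * A⁻¹ * Fᵀ = -G := by
    rw [hAinv]
    calc F * (F⁻¹ * (-G) * Fᵀ⁻¹) * Fᵀ
        = (F * F⁻¹) * (-G) * (Fᵀ⁻¹ * Fᵀ) := by noncomm_ring
      _ = -G := by
          rw [Matrix.mul_nonsing_inv F (isUnit_iff_ne_zero.mpr hdetF), Matrix.nonsing_inv_mul Fᵀ (isUnit_iff_ne_zero.mpr hdetFT),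
            Matrix.one_mul, Matrix.mul_one]
  have hconj : (F * (D - A⁻¹) * Fᴴ).PosSemidef := h2.mul_mul_conjTranspose_same F
  have hkey : F * (D - A⁻¹) * Fᴴ = G + F * D * Fᵀ := by
    rw [Matrix.conjTranspose_eq_transpose_of_trivial]
    have : F * (D - A⁻¹) * Fᵀ = F * D * Fᵀ - F * A⁻¹ * Fᵀ := by noncomm_ring
    rw [this, hFA]
    noncomm_ring
  rwa [hkey] at hconj
end

section
/- For τ ranging over positive reals and σ over ℝ, the function Π^d(τ, σ) = −½ fᵗG(τ,σ)⁻¹f − (τ ln τ − τ) − σ²/(2β) − ατ − θσ is strictly concave on any convex subset of the region where G(τ,σ) = A + τB + σC is positive definite, provided B, C ⪰ 0 and f ∈ ℝ^n, β > 0. -/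
open Matrix Real

private lemma quad_key {n : ℕ} (M : Matrix (Fin n) (Fin n) ℝ) (hM : M.PosDef)
    (f x : Fin n → ℝ) :
    2 * (f ⬝ᵥ x) - x ⬝ᵥ (M *ᵥ x) ≤ f ⬝ᵥ (M⁻¹ *ᵥ f) := by
  set u := M⁻¹ *ᵥ f with hu
  have hMdet : IsUnit M.det := hM.det_pos.ne'.isUnit
  have hMu : M *ᵥ u = f := by
    rw [hu, mulVec_mulVec, Matrix.mul_nonsing_inv _ hMdet, one_mulVec]
  have hsym : Mᵀ = M := by
    have := hM.isHermitian
    simpa [Matrix.IsHermitian, Matrix.conjTranspose_eq_transpose_of_trivial] using this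
  have hmul : ∀ v w : Fin n → ℝ, v ⬝ᵥ (M *ᵥ w) = (M *ᵥ v) ⬝ᵥ w := by
    intro v w
    rw [Matrix.dotProduct_mulVec, ← Matrix.mulVec_transpose, hsym]
  have h0 : 0 ≤ (x - u) ⬝ᵥ (M *ᵥ (x - u)) := by
    have := hM.posSemidef.dotProduct_mulVec_nonneg (x - u)
    simpa using this
  have hexp : (x - u) ⬝ᵥ (M *ᵥ (x - u))
      = x ⬝ᵥ (M *ᵥ x) - 2 * (f ⬝ᵥ x) + f ⬝ᵥ u := by
    have h1 : x ⬝ᵥ (M *ᵥ u) = f ⬝ᵥ x := by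
      rw [hMu]; exact dotProduct_comm _ _
    have h2 : u ⬝ᵥ (M *ᵥ x) = f ⬝ᵥ x := by
      rw [hmul, hMu]
    have h3 : u ⬝ᵥ (M *ᵥ u) = f ⬝ᵥ u := by
      rw [hMu]; exact dotProduct_comm _ _
    rw [Matrix.mulVec_sub, dotProduct_sub, sub_dotProduct, sub_dotProduct,
      h1, h2, h3]
    ring
  linarith [hexp ▸ h0]

private lemma inv_quad_convex {n : ℕ} (A B C : Matrix (Fin n) (Fin n) ℝ)
    (f : Fin n → ℝ) (S : Set (ℝ × ℝ)) (hS : Convex ℝ S)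
    (hSsub : S ⊆ {q : ℝ × ℝ | 0 < q.1 ∧ (A + q.1 • B + q.2 • C).PosDef}) :
    ConvexOn ℝ S (fun q : ℝ × ℝ => f ⬝ᵥ ((A + q.1 • B + q.2 • C)⁻¹ *ᵥ f)) := by
  refine ⟨hS, fun x hx y hy a b ha hb hab => ?_⟩
  set z := a • x + b • y with hz
  have hzS : z ∈ S := hS hx hy ha hb hab
  set Gz := A + z.1 • B + z.2 • C with hGz
  set Gx := A + x.1 • B + x.2 • C with hGx
  set Gy := A + y.1 • B + y.2 • C with hGy
  have hzPD : Gz.PosDef := (hSsub hzS).2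
  have hxPD : Gx.PosDef := (hSsub hx).2
  have hyPD : Gy.PosDef := (hSsub hy).2
  set u := Gz⁻¹ *ᵥ f with hu
  have hGzu : Gz *ᵥ u = f := by
    rw [hu, mulVec_mulVec, Matrix.mul_nonsing_inv _ hzPD.det_pos.ne'.isUnit, one_mulVec]
  have hGcomb : Gz = a • Gx + b • Gy := by
    have h1 : z.1 = a * x.1 + b * y.1 := rfl
    have h2 : z.2 = a * x.2 + b * y.2 := rfl
    rw [hGz, hGx, hGy, h1, h2]
    ext i j
    simp only [Matrix.add_apply, Matrix.smul_apply, smul_eq_mul]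
    linear_combination (-(A i j)) * hab
  have hzval : f ⬝ᵥ (Gz⁻¹ *ᵥ f) = 2 * (f ⬝ᵥ u) - u ⬝ᵥ (Gz *ᵥ u) := by
    rw [hGzu]
    have : u ⬝ᵥ f = f ⬝ᵥ u := dotProduct_comm _ _
    rw [this, ← hu]
    ring
  have hsplit : u ⬝ᵥ (Gz *ᵥ u) = a * (u ⬝ᵥ (Gx *ᵥ u)) + b * (u ⬝ᵥ (Gy *ᵥ u)) := by
    rw [hGcomb, Matrix.add_mulVec, Matrix.smul_mulVec, Matrix.smul_mulVec,
      dotProduct_add, dotProduct_smul, dotProduct_smul]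
    simp [smul_eq_mul]
  have key1 := quad_key Gx hxPD f u
  have key2 := quad_key Gy hyPD f u
  have hgz : f ⬝ᵥ ((A + z.1 • B + z.2 • C)⁻¹ *ᵥ f)
      = 2 * (f ⬝ᵥ u) - (a * (u ⬝ᵥ (Gx *ᵥ u)) + b * (u ⬝ᵥ (Gy *ᵥ u))) := by
    rw [← hGz]
    conv_lhs => rw [hzval, hsplit]
  have k1 := mul_le_mul_of_nonneg_left key1 ha
  have k2 := mul_le_mul_of_nonneg_left key2 hb
  have hF : 2 * (f ⬝ᵥ u) * a + 2 * (f ⬝ᵥ u) * b = 2 * (f ⬝ᵥ u) := by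
    linear_combination 2 * (f ⬝ᵥ u) * hab
  have goal' : f ⬝ᵥ ((A + z.1 • B + z.2 • C)⁻¹ *ᵥ f)
      ≤ a * (f ⬝ᵥ (Gx⁻¹ *ᵥ f)) + b * (f ⬝ᵥ (Gy⁻¹ *ᵥ f)) := by
    rw [hgz]; nlinarith [k1, k2, hF]
  simpa [smul_eq_mul, hGx, hGy] using goal'

theorem stmt_16 {n : ℕ} (A B C : Matrix (Fin n) (Fin n) ℝ)
    (hA : A.IsSymm) (hB : B.PosSemidef) (hC : C.PosSemidef)
    (β : ℝ) (hβ : 0 < β) (α θ : ℝ) (f : Fin n → ℝ)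
    (S : Set (ℝ × ℝ)) (hS : Convex ℝ S)
    (hSsub : S ⊆ {q : ℝ × ℝ | 0 < q.1 ∧ (A + q.1 • B + q.2 • C).PosDef}) :
    StrictConcaveOn ℝ S (fun q : ℝ × ℝ =>
      -(1/2) * (f ⬝ᵥ ((A + q.1 • B + q.2 • C)⁻¹ *ᵥ f)) -
      (q.1 * Real.log q.1 - q.1) - q.2 ^ 2 / (2 * β) - α * q.1 - θ * q.2) := by
  have hconv := inv_quad_convex A B C f S hS hSsub
  refine ⟨hS, fun x hx y hy hne a b ha hb hab => ?_⟩
  have hquad := hconv.2 hx hy ha.le hb.le hab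
  set z := a • x + b • y with hz
  simp only [smul_eq_mul] at hquad ⊢
  have hx1 : 0 < x.1 := (hSsub hx).1
  have hy1 : 0 < y.1 := (hSsub hy).1
  have hz1 : z.1 = a * x.1 + b * y.1 := rfl
  have hz2 : z.2 = a * x.2 + b * y.2 := rfl
  have h2β : 0 < 2 * β := by linarith
  have hmlog_weak : z.1 * Real.log z.1
      ≤ a * (x.1 * Real.log x.1) + b * (y.1 * Real.log y.1) := by
    have := Real.strictConvexOn_mul_log.convexOn.2 (Set.mem_Ici.2 hx1.le)
      (Set.mem_Ici.2 hy1.le) ha.le hb.le hab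
    simpa [hz1] using this
  have hsqid : a * x.2 ^ 2 + b * y.2 ^ 2 - (a * x.2 + b * y.2) ^ 2
      = a * b * (x.2 - y.2) ^ 2 := by
    linear_combination (-(a * x.2 ^ 2 + b * y.2 ^ 2)) * hab
  have hab_nonneg := mul_nonneg (mul_nonneg ha.le hb.le) (sq_nonneg (x.2 - y.2))
  have hsq_weak : z.2 ^ 2 ≤ a * x.2 ^ 2 + b * y.2 ^ 2 := by
    rw [hz2]; linarith [hsqid]
  have heq : (a * x.2 ^ 2 + b * y.2 ^ 2) / (2 * β)
      = a * (x.2 ^ 2 / (2 * β)) + b * (y.2 ^ 2 / (2 * β)) := by ring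
  have hstrict : z.1 * Real.log z.1 + z.2 ^ 2 / (2 * β)
      < a * (x.1 * Real.log x.1 + x.2 ^ 2 / (2 * β))
        + b * (y.1 * Real.log y.1 + y.2 ^ 2 / (2 * β)) := by
    by_cases h1 : x.1 = y.1
    · have h2 : x.2 ≠ y.2 := fun h2 => hne (Prod.ext h1 h2)
      have hsq : z.2 ^ 2 < a * x.2 ^ 2 + b * y.2 ^ 2 := by
        have hd : x.2 - y.2 ≠ 0 := sub_ne_zero.2 h2
        have hpos : 0 < a * b * (x.2 - y.2) ^ 2 := by positivity
        rw [hz2]; linarith [hsqid]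
      have hdiv : z.2 ^ 2 / (2 * β) < (a * x.2 ^ 2 + b * y.2 ^ 2) / (2 * β) := by
        gcongr
      linarith [hmlog_weak, heq]
    · have hmlog : z.1 * Real.log z.1
          < a * (x.1 * Real.log x.1) + b * (y.1 * Real.log y.1) := by
        have := Real.strictConvexOn_mul_log.2 (Set.mem_Ici.2 hx1.le)
          (Set.mem_Ici.2 hy1.le) h1 ha hb hab
        simpa [hz1] using this
      have hdiv : z.2 ^ 2 / (2 * β) ≤ (a * x.2 ^ 2 + b * y.2 ^ 2) / (2 * β) := by
        gcongr
      linarith [heq]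
  have hαz : α * z.1 = a * (α * x.1) + b * (α * y.1) := by rw [hz1]; ring
  have hθz : θ * z.2 = a * (θ * x.2) + b * (θ * y.2) := by rw [hz2]; ring
  linarith [hquad, hstrict, hαz, hθz, hz1]
end
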